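/- Let f, g be chains in the symmetric inverse monoid I_n with |f| ≥ |g|. Then there is a surjective monoid homomorphism from the inverse submonoid of I_n generated by f (and f⁻¹) onto the inverse submonoid generated by g (and g⁻¹). -/

import Mathlib

/-- The symmetric inverse monoid structure on partial bijections of a set. -/
instance pequivMonoid (α : Type*) : Monoid (PEquiv α α) where
  mul f g := f.trans g
  one := PEquiv.refl α
  mul_assoc := PEquiv.trans_assoc
  one_mul := PEquiv.refl_trans
  mul_one := PEquiv.trans_refl

/-- `f` is a chain of length `m` (i.e. `m` pairs): there are distinct points
`c 0, …, c m` with `f` mapping `c i ↦ c (i+1)` and nothing else. -/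
def IsChainPP {n : ℕ} (f : PEquiv (Fin n) (Fin n)) (m : ℕ) : Prop :=
  ∃ c : Fin (m + 1) → Fin n, Function.Injective c ∧
    ∀ a b : Fin n, f a = some b ↔ ∃ i : Fin m, a = c i.castSucc ∧ b = c i.succ

namespace ChainAux

@[simp] lemma mul_apply {α : Type*} (f g : PEquiv α α) (a : α) :
    (f * g) a = (f a).bind g := rfl

@[simp] lemma one_apply {α : Type*} (a : α) : (1 : PEquiv α α) a = some a := rfl

/-- The ±1 step of a letter. -/
def stepz (b : Bool) : ℤ := bif b then 1 else -1

/-- Total sum of a word. -/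
def tsum : List Bool → ℤ
  | [] => 0
  | b :: t => stepz b + tsum t

/-- Minimum prefix sum. -/
def losum : List Bool → ℤ
  | [] => 0
  | b :: t => min 0 (stepz b + losum t)

/-- Maximum prefix sum. -/
def hisum : List Bool → ℤ
  | [] => 0
  | b :: t => max 0 (stepz b + hisum t)

lemma tsum_cons (b : Bool) (t : List Bool) : tsum (b :: t) = stepz b + tsum t := rfl
lemma losum_cons (b : Bool) (t : List Bool) : losum (b :: t) = min 0 (stepz b + losum t) := rfl
lemma hisum_cons (b : Bool) (t : List Bool) : hisum (b :: t) = max 0 (stepz b + hisum t) := rfl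

lemma losum_nonpos (l : List Bool) : losum l ≤ 0 := by
  cases l with
  | nil => simp [losum]
  | cons b t => simp [losum]

lemma hisum_nonneg (l : List Bool) : 0 ≤ hisum l := by
  cases l with
  | nil => simp [hisum]
  | cons b t => simp [hisum]

lemma losum_le_tsum (l : List Bool) : losum l ≤ tsum l := by
  induction l with
  | nil => simp [losum, tsum]
  | cons b t ih => simp only [losum, tsum]; omega

lemma tsum_le_hisum (l : List Bool) : tsum l ≤ hisum l := by
  induction l with
  | nil => simp [hisum, tsum]
  | cons b t ih => simp only [hisum, tsum]; omega

lemma spread_pos {l : List Bool} (hl : l ≠ []) : 1 ≤ hisum l - losum l := by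
  cases l with
  | nil => exact absurd rfl hl
  | cons b t =>
    have h1 := losum_nonpos t
    have h2 := hisum_nonneg t
    simp only [losum, hisum]
    cases b <;> simp [stepz] <;> omega

/-- Evaluation of a word in the letters `f`, `f.symm`. -/
def evl {n : ℕ} (f : PEquiv (Fin n) (Fin n)) : List Bool → PEquiv (Fin n) (Fin n)
  | [] => 1
  | b :: t => (bif b then f else f.symm) * evl f t

/-- Partial enumeration of the chain, indexed by `ℤ`. -/
def pmap {n m : ℕ} (c : Fin (m + 1) → Fin n) (z : ℤ) : Option (Fin n) :=
  if h : 0 ≤ z ∧ z ≤ m then some (c ⟨z.toNat, by omega⟩) else none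

lemma pmap_some {n m : ℕ} (c : Fin (m + 1) → Fin n) {z : ℤ} (h0 : 0 ≤ z) (hm : z ≤ m) :
    pmap c z = some (c ⟨z.toNat, by omega⟩) := by
  simp [pmap, h0, hm]

lemma pmap_eq_some {n m : ℕ} {c : Fin (m + 1) → Fin n} {z : ℤ} {a : Fin n}
    (h : pmap c z = some a) : 0 ≤ z ∧ z ≤ m ∧ ∃ hz : z.toNat < m + 1, a = c ⟨z.toNat, hz⟩ := by
  by_cases hz : 0 ≤ z ∧ z ≤ m
  · refine ⟨hz.1, hz.2, by omega, ?_⟩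
    rw [pmap_some c hz.1 hz.2] at h
    exact (Option.some_injective _ h).symm
  · simp [pmap, hz] at h

lemma pmap_inj {n m : ℕ} {c : Fin (m + 1) → Fin n} (hc : Function.Injective c)
    {z z' : ℤ} {a : Fin n} (h : pmap c z = some a) (h' : pmap c z' = some a) : z = z' := by
  obtain ⟨h0, hm, hlt, rfl⟩ := pmap_eq_some h
  obtain ⟨h0', hm', hlt', he⟩ := pmap_eq_some h'
  have h2 := congrArg Fin.val (hc he)
  simp only [] at h2
  omega

section Chain

variable {n m : ℕ} {c : Fin (m + 1) → Fin n} {f : PEquiv (Fin n) (Fin n)}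
  (hc : Function.Injective c)
  (hf : ∀ a b : Fin n, f a = some b ↔ ∃ i : Fin m, a = c i.castSucc ∧ b = c i.succ)

include hc hf

/-- The chain condition in terms of `pmap`. -/
lemma chain_pmap : ∀ a b : Fin n, f a = some b ↔
    ∃ z : ℤ, 0 ≤ z ∧ z + 1 ≤ m ∧ pmap c z = some a ∧ pmap c (z + 1) = some b := by
  intro a b
  rw [hf]
  constructor
  · rintro ⟨i, rfl, rfl⟩
    have hi := i.isLt
    refine ⟨(i : ℤ), Int.natCast_nonneg _, by omega, ?_, ?_⟩
    · rw [pmap_some c (Int.natCast_nonneg _) (by omega)]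
      exact congrArg (some ∘ c) (Fin.ext (by simp)) |>.symm
    · rw [pmap_some c (by omega) (by omega)]
      refine congrArg (some ∘ c) (Fin.ext ?_) |>.symm
      simp only [Fin.val_succ]
      omega
  · rintro ⟨z, h0, h1, ha, hb⟩
    obtain ⟨_, _, hz, rfl⟩ := pmap_eq_some ha
    obtain ⟨_, _, hz', rfl⟩ := pmap_eq_some hb
    refine ⟨⟨z.toNat, by omega⟩, ?_, ?_⟩
    · exact congrArg c (Fin.ext (by simp))
    · refine congrArg c (Fin.ext ?_)
      simp [Fin.val_succ]
      omega

/-- Characterization of a single step. -/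
lemma step_pmap (x : Bool) : ∀ a b : Fin n, (bif x then f else f.symm) a = some b ↔
    ∃ z : ℤ, 0 ≤ z ∧ z ≤ m ∧ 0 ≤ z + stepz x ∧ z + stepz x ≤ m ∧
      pmap c z = some a ∧ pmap c (z + stepz x) = some b := by
  intro a b
  cases x with
  | true =>
    simp only [cond_true, stepz]
    rw [chain_pmap hc hf a b]
    constructor
    · rintro ⟨z, h0, h1, ha, hb⟩
      exact ⟨z, h0, by omega, by omega, by omega, ha, hb⟩
    · rintro ⟨z, h0, _, _, h1, ha, hb⟩
      exact ⟨z, h0, by omega, ha, hb⟩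
  | false =>
    simp only [cond_false, stepz]
    rw [PEquiv.eq_some_iff, chain_pmap hc hf b a]
    constructor
    · rintro ⟨z, h0, h1, hb, ha⟩
      exact ⟨z + 1, by omega, by omega, by omega, by omega, ha, by simpa using hb⟩
    · rintro ⟨z, h0, hm', h0', hm'', ha, hb⟩
      refine ⟨z - 1, by omega, by omega, by rw [sub_eq_add_neg]; exact hb, by simpa using ha⟩

/-- Characterization of the evaluation of a nonempty word on the chain. -/
lemma evl_pmap : ∀ (l : List Bool), l ≠ [] → ∀ a b : Fin n, evl f l a = some b ↔
    ∃ z : ℤ, 0 ≤ z + losum l ∧ z + hisum l ≤ m ∧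
      pmap c z = some a ∧ pmap c (z + tsum l) = some b := by
  intro l
  induction l with
  | nil => intro h; exact absurd rfl h
  | cons x t ih =>
    intro _ a b
    cases t with
    | nil =>
      have : evl f [x] = (bif x then f else f.symm) := by
        simp [evl, mul_one]
      rw [this, step_pmap hc hf x a b]
      simp only [losum, hisum, tsum, stepz]
      constructor
      · rintro ⟨z, h0, hm', h0', hm'', ha, hb⟩
        exact ⟨z, by cases x <;> simp_all [stepz] <;> omega,
          by cases x <;> simp_all [stepz] <;> omega, ha, by cases x <;> simpa using hb⟩
      · rintro ⟨z, h0, hm', ha, hb⟩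
        have hlo : (0:ℤ) ≤ z + min 0 (bif x then (1:ℤ) else -1) := by simpa using h0
        have hhi : z + max 0 (bif x then (1:ℤ) else -1) ≤ m := by simpa using hm'
        refine ⟨z, by cases x <;> simp_all <;> omega, by cases x <;> simp_all <;> omega,
          by cases x <;> simp_all <;> omega, by cases x <;> simp_all <;> omega, ha,
          by cases x <;> simpa using hb⟩
    | cons y t2 =>
      have hne : (y :: t2) ≠ [] := by simp
      have hev : evl f (x :: y :: t2) a = ((bif x then f else f.symm) a).bind (evl f (y :: t2)) := rfl
      rw [hev, Option.bind_eq_some_iff]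
      constructor
      · rintro ⟨mid, hmid, hrest⟩
        rw [step_pmap hc hf x a mid] at hmid
        rw [ih hne mid b] at hrest
        obtain ⟨z, h0, hm', h0', hm'', ha, hb⟩ := hmid
        obtain ⟨w, hw0, hwm, hwmid, hwb⟩ := hrest
        have hzw : w = z + stepz x := pmap_inj hc hwmid hb
        subst hzw
        refine ⟨z, ?_, ?_, ha, ?_⟩
        · rw [losum_cons]; omega
        · rw [hisum_cons]; omega
        · rw [tsum_cons, show z + (stepz x + tsum (y :: t2)) = z + stepz x + tsum (y :: t2) by ring]
          exact hwb
      · rintro ⟨z, h0, hm', ha, hb⟩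
        have hlo0 := losum_nonpos (y :: t2)
        have hhi0 := hisum_nonneg (y :: t2)
        have hlt := losum_le_tsum (y :: t2)
        have hth := tsum_le_hisum (y :: t2)
        rw [losum_cons] at h0
        rw [hisum_cons] at hm'
        have hz0 : 0 ≤ z := by omega
        have hzm : z ≤ m := by omega
        have hs0 : 0 ≤ z + stepz x := by omega
        have hsm : z + stepz x ≤ m := by omega
        refine ⟨c ⟨(z + stepz x).toNat, by omega⟩, ?_, ?_⟩
        · rw [step_pmap hc hf x a _]
          exact ⟨z, hz0, hzm, hs0, hsm, ha, pmap_some c hs0 hsm⟩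
        · rw [ih hne _ b]
          refine ⟨z + stepz x, by omega, by omega, pmap_some c hs0 hsm, ?_⟩
          rw [show z + stepz x + tsum (y :: t2) = z + (stepz x + tsum (y :: t2)) by ring, ← tsum_cons]
          exact hb

lemma pmap_last : pmap c (m : ℤ) = some (c (Fin.last m)) := by
  rw [pmap_some c (by positivity) le_rfl]
  exact congrArg (some ∘ c) (Fin.ext (by simp)) |>.symm

lemma pmap_zero' : pmap c (0 : ℤ) = some (c 0) := by
  rw [pmap_some c le_rfl (by positivity)]
  exact congrArg (some ∘ c) (Fin.ext (by simp)) |>.symm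

lemma evl_dom_nonempty (l : List Bool) (hl : l ≠ []) (hsp : hisum l - losum l ≤ (m : ℤ)) :
    ∃ a b, evl f l a = some b := by
  have h0 := losum_nonpos l; have h2 := hisum_nonneg l
  have h3 := losum_le_tsum l; have h4 := tsum_le_hisum l
  refine ⟨c ⟨(-losum l).toNat, by omega⟩, c ⟨(-losum l + tsum l).toNat, by omega⟩, ?_⟩
  rw [evl_pmap hc hf l hl]
  exact ⟨-losum l, by omega, by omega, pmap_some c (by omega) (by omega),
    pmap_some c (by omega) (by omega)⟩

lemma evl_dom_empty (l : List Bool) (hl : l ≠ []) (hsp : (m : ℤ) < hisum l - losum l)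
    (a : Fin n) : evl f l a = none := by
  cases hq : evl f l a with
  | none => rfl
  | some b =>
    exfalso
    rw [evl_pmap hc hf l hl] at hq
    obtain ⟨z, h1, h2, _, _⟩ := hq
    omega

lemma data_extract (l l' : List Bool) (hl : l ≠ []) (hl' : l' ≠ [])
    (h : evl f l = evl f l') :
    ∀ z : ℤ, 0 ≤ z + losum l → z + hisum l ≤ m →
      0 ≤ z + losum l' ∧ z + hisum l' ≤ m ∧ tsum l = tsum l' := by
  intro z hz1 hz2
  have h0 := losum_nonpos l; have h2 := hisum_nonneg l
  have h3 := losum_le_tsum l; have h4 := tsum_le_hisum l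
  obtain ⟨a, ha⟩ : ∃ a, pmap c z = some a := ⟨_, pmap_some c (by omega) (by omega)⟩
  obtain ⟨b, hb⟩ : ∃ b, pmap c (z + tsum l) = some b := ⟨_, pmap_some c (by omega) (by omega)⟩
  have hev : evl f l' a = some b := by
    rw [← h]; exact (evl_pmap hc hf l hl a b).2 ⟨z, hz1, hz2, ha, hb⟩
  rw [evl_pmap hc hf l' hl'] at hev
  obtain ⟨w, hw1, hw2, hwa, hwb⟩ := hev
  have hwz : w = z := pmap_inj hc hwa ha
  have heq : w + tsum l' = z + tsum l := pmap_inj hc hwb hb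
  refine ⟨by omega, by omega, by omega⟩

lemma evl_ne_one (l : List Bool) (hl : l ≠ []) : evl f l ≠ 1 := by
  intro h1
  have hsp := spread_pos hl
  have h0 := losum_nonpos l; have h2 := hisum_nonneg l
  by_cases hh : 1 ≤ hisum l
  · have hev : evl f l (c (Fin.last m)) = some (c (Fin.last m)) := by rw [h1]; rfl
    rw [evl_pmap hc hf l hl] at hev
    obtain ⟨z, hz1, hz2, hza, -⟩ := hev
    have hzm : z = (m : ℤ) := pmap_inj hc hza (pmap_last hc hf)
    omega
  · have hev : evl f l (c 0) = some (c 0) := by rw [h1]; rfl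
    rw [evl_pmap hc hf l hl] at hev
    obtain ⟨z, hz1, hz2, hza, -⟩ := hev
    have hz0 : z = 0 := pmap_inj hc hza (pmap_zero' hc hf)
    omega

end Chain

lemma option_ext {α : Type*} {o o' : Option α} (h : ∀ b, o = some b ↔ o' = some b) : o = o' := by
  cases o' with
  | some b => exact (h b).2 rfl
  | none =>
    cases o with
    | none => rfl
    | some b => exact absurd ((h b).1 rfl) (by simp)

section Two

variable {n mf mg : ℕ} {cf : Fin (mf + 1) → Fin n} {cg : Fin (mg + 1) → Fin n}
  {f g : PEquiv (Fin n) (Fin n)}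
  (hcf : Function.Injective cf)
  (hff : ∀ a b : Fin n, f a = some b ↔ ∃ i : Fin mf, a = cf i.castSucc ∧ b = cf i.succ)
  (hcg : Function.Injective cg)
  (hgg : ∀ a b : Fin n, g a = some b ↔ ∃ i : Fin mg, a = cg i.castSucc ∧ b = cg i.succ)
  (hm : mg ≤ mf)

include hcf hff hcg hgg hm

lemma key (l l' : List Bool) (h : evl f l = evl f l') : evl g l = evl g l' := by
  rcases eq_or_ne l [] with rfl | hl
  · rcases eq_or_ne l' [] with rfl | hl'
    · rfl
    · exact absurd h.symm (evl_ne_one hcf hff l' hl')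
  · rcases eq_or_ne l' [] with rfl | hl'
    · exact absurd h (evl_ne_one hcf hff l hl)
    · have h0 := losum_nonpos l; have h2 := hisum_nonneg l
      have h0' := losum_nonpos l'; have h2' := hisum_nonneg l'
      by_cases hsp : hisum l - losum l ≤ (mf : ℤ)
      · obtain ⟨ha1, ha2, hts⟩ :=
          data_extract hcf hff l l' hl hl' h (-losum l) (by omega) (by omega)
        obtain ⟨hb1, hb2, -⟩ :=
          data_extract hcf hff l l' hl hl' h ((mf : ℤ) - hisum l) (by omega) (by omega)
        have hsp' : hisum l' - losum l' ≤ (mf : ℤ) := by omega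
        obtain ⟨hc1, hc2, -⟩ :=
          data_extract hcf hff l' l hl' hl h.symm (-losum l') (by omega) (by omega)
        obtain ⟨hd1, hd2, -⟩ :=
          data_extract hcf hff l' l hl' hl h.symm ((mf : ℤ) - hisum l') (by omega) (by omega)
        have hlo : losum l = losum l' := by omega
        have hhi : hisum l = hisum l' := by omega
        apply PEquiv.ext; intro a
        apply option_ext; intro b
        rw [evl_pmap hcg hgg l hl a b, evl_pmap hcg hgg l' hl' a b, hlo, hhi, hts]
      · have hsp' : (mf : ℤ) < hisum l' - losum l' := by
          by_contra hle
          push_neg at hle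
          obtain ⟨a, b, hab⟩ := evl_dom_nonempty hcf hff l' hl' hle
          rw [← h, evl_pmap hcf hff l hl] at hab
          obtain ⟨z, h1', h2', -, -⟩ := hab
          omega
        apply PEquiv.ext; intro a
        rw [evl_dom_empty hcg hgg l hl (by omega) a, evl_dom_empty hcg hgg l' hl' (by omega) a]

end Two

/-- The evaluation homomorphism from the free monoid on two letters. -/
def piH {n : ℕ} (f : PEquiv (Fin n) (Fin n)) : FreeMonoid Bool →* PEquiv (Fin n) (Fin n) :=
  FreeMonoid.lift (fun b => bif b then f else f.symm)

lemma piH_eq_evl {n : ℕ} (f : PEquiv (Fin n) (Fin n)) (w : FreeMonoid Bool) :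
    piH f w = evl f (FreeMonoid.toList w) := by
  rw [piH, FreeMonoid.lift_apply]
  induction FreeMonoid.toList w with
  | nil => rfl
  | cons b t ih => rw [List.map_cons, List.prod_cons, ih]; rfl

lemma evl_mem {n : ℕ} (f : PEquiv (Fin n) (Fin n)) (l : List Bool) :
    evl f l ∈ Submonoid.closure {f, f.symm} := by
  induction l with
  | nil => exact one_mem _
  | cons b t ih =>
    exact mul_mem (Submonoid.subset_closure (by cases b <;> simp)) ih

lemma piH_mem {n : ℕ} (f : PEquiv (Fin n) (Fin n)) (w : FreeMonoid Bool) :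
    piH f w ∈ Submonoid.closure {f, f.symm} := by
  rw [piH_eq_evl]; exact evl_mem f _

lemma mem_exists_word {n : ℕ} (f : PEquiv (Fin n) (Fin n)) (x : PEquiv (Fin n) (Fin n))
    (hx : x ∈ Submonoid.closure {f, f.symm}) : ∃ w : FreeMonoid Bool, piH f w = x := by
  induction hx using Submonoid.closure_induction with
  | mem y hy =>
    rcases hy with rfl | rfl
    · exact ⟨FreeMonoid.of true, rfl⟩
    · exact ⟨FreeMonoid.of false, rfl⟩
  | one => exact ⟨1, map_one _⟩
  | mul x y hx hy ihx ihy =>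
    obtain ⟨w1, hw1⟩ := ihx
    obtain ⟨w2, hw2⟩ := ihy
    exact ⟨w1 * w2, by rw [map_mul, hw1, hw2]⟩

end ChainAux

open ChainAux in
theorem chain_surjective_hom (n mf mg : ℕ) (f g : PEquiv (Fin n) (Fin n))
    (hf : IsChainPP f mf) (hg : IsChainPP g mg) (h : mg ≤ mf) :
    ∃ φ : (Submonoid.closure {f, f.symm} : Submonoid (PEquiv (Fin n) (Fin n))) →*
        (Submonoid.closure {g, g.symm} : Submonoid (PEquiv (Fin n) (Fin n))),
      Function.Surjective φ := by
  obtain ⟨cf, hcf, hff⟩ := hf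
  obtain ⟨cg, hcg, hgg⟩ := hg
  have hkey : ∀ w w' : FreeMonoid Bool, piH f w = piH f w' → piH g w = piH g w' := by
    intro w w' hww
    rw [piH_eq_evl, piH_eq_evl]
    exact key hcf hff hcg hgg h _ _ (by rw [← piH_eq_evl, ← piH_eq_evl]; exact hww)
  have hWe := fun (x : (Submonoid.closure {f, f.symm} : Submonoid (PEquiv (Fin n) (Fin n)))) =>
    mem_exists_word f x.1 x.2
  choose W hW using hWe
  refine ⟨{ toFun := fun x => ⟨piH g (W x), piH_mem g (W x)⟩, map_one' := ?_, map_mul' := ?_ }, ?_⟩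
  · apply Subtype.ext
    have h1 : piH f (W 1) = piH f 1 := by rw [hW 1, map_one]; rfl
    have := hkey _ _ h1
    simpa using this
  · intro x y
    apply Subtype.ext
    have h1 : piH f (W (x * y)) = piH f (W x * W y) := by
      rw [hW (x * y), map_mul, hW x, hW y]; rfl
    have := hkey _ _ h1
    simpa [map_mul] using this
  · intro y
    obtain ⟨w, hw⟩ := mem_exists_word g y.1 y.2
    refine ⟨⟨piH f w, piH_mem f w⟩, Subtype.ext ?_⟩
    have h1 : piH f (W ⟨piH f w, piH_mem f w⟩) = piH f w := hW _
    have := hkey _ _ h1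
    exact this.trans hw
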